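/- For every $\alpha \in (1, 3/2]$ and every $\lambda > 1$, we have $\frac{\lambda^{\alpha-1} - \lambda^{2-\alpha}}{\lambda - 1} \geq 2\alpha - 3$. -/
import Mathlib

open Real

lemma convexOn_sinh_Ici : ConvexOn ℝ (Set.Ici (0:ℝ)) Real.sinh := by
  apply convexOn_of_deriv2_nonneg (convex_Ici 0)
  · exact Real.continuous_sinh.continuousOn
  · exact Real.differentiable_sinh.differentiableOn
  · rw [Real.deriv_sinh]
    exact Real.differentiable_cosh.differentiableOn
  · intro x hx
    have h2 : deriv^[2] Real.sinh = Real.sinh := by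
      show deriv (deriv Real.sinh) = Real.sinh
      rw [Real.deriv_sinh, Real.deriv_cosh]
    rw [h2]
    rw [interior_Ici] at hx
    exact le_of_lt (Real.sinh_pos_iff.2 hx)

lemma sinh_smul_le (s u : ℝ) (hs0 : 0 ≤ s) (hs1 : s ≤ 1) (hu : 0 ≤ u) :
    Real.sinh (s * u) ≤ s * Real.sinh u := by
  have h := convexOn_sinh_Ici.2 (Set.mem_Ici.2 hu) (Set.mem_Ici.2 (le_refl (0:ℝ)))
    hs0 (show (0:ℝ) ≤ 1 - s by linarith) (by ring)
  simpa [Real.sinh_zero, smul_eq_mul] using h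

theorem stmt2 (α lam : ℝ) (hα : α ∈ Set.Ioc 1 (3/2)) (hlam : 1 < lam) :
    2 * α - 3 ≤ (lam ^ (α - 1) - lam ^ (2 - α)) / (lam - 1) := by
  obtain ⟨hα1, hα2⟩ := hα
  have hlam0 : (0:ℝ) < lam := by linarith
  have hu : 0 < Real.log lam := Real.log_pos hlam
  set u := Real.log lam with hudef
  set s : ℝ := 3 - 2 * α with hsdef
  have hs0 : 0 ≤ s := by simp [hsdef]; linarith
  have hs1 : s ≤ 1 := by simp [hsdef]; linarith
  have key := sinh_smul_le s (u / 2) hs0 hs1 (by linarith)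
  rw [Real.sinh_eq, Real.sinh_eq] at key
  -- multiply by 2 * exp(u/2)
  have hek : 0 < Real.exp (u / 2) := Real.exp_pos _
  have key2 : Real.exp (s * (u/2) + u/2) - Real.exp (-(s * (u/2)) + u/2)
      ≤ s * (Real.exp (u/2 + u/2) - Real.exp (-(u/2) + u/2)) := by
    rw [Real.exp_add, Real.exp_add, Real.exp_add, Real.exp_add]
    nlinarith [hek, Real.exp_pos (s * (u/2)), Real.exp_pos (-(s*(u/2))), Real.exp_pos (u/2), Real.exp_pos (-(u/2))]
  have hrw1 : lam ^ (α - 1) = Real.exp (-(s * (u/2)) + u/2) := by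
    rw [Real.rpow_def_of_pos hlam0]
    congr 1
    rw [← hudef]; ring
  have hrw2 : lam ^ (2 - α) = Real.exp (s * (u/2) + u/2) := by
    rw [Real.rpow_def_of_pos hlam0]
    congr 1
    rw [← hudef]; ring
  have hrw3 : lam = Real.exp (u/2 + u/2) := by
    rw [← Real.exp_log hlam0, ← hudef]; congr 1; ring
  have hrw4 : Real.exp (-(u/2) + u/2) = 1 := by
    rw [neg_add_cancel, Real.exp_zero]
  rw [le_div_iff₀ (by linarith : (0:ℝ) < lam - 1)]
  rw [hrw1, hrw2, hrw3]
  rw [hrw4] at key2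
  -- goal: (2α-3) * (exp(u/2+u/2) - 1) ≤ exp(-(s u/2)+u/2) - exp(s u/2 + u/2)
  have : (2 * α - 3) = -s := by rw [hsdef]; ring
  rw [this]
  linarith [key2]
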